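/- Suppose the coefficients satisfy the symmetry condition a_{i₁,i₂,i₃,μ₁,μ₂,μ₃} = a_{i₂,i₁,i₃,μ₂,μ₁,μ₃} and the cancellation condition ∑_{σ ∈ Sym({1,2,3})} a_{i_{σ(1)},i_{σ(2)},i_{σ(3)},μ_{σ(1)},μ_{σ(2)},μ_{σ(3)}} = 0 for every choice of i₁,i₂,i₃ ∈ {1,2,3,4} and (μ₁,μ₂,μ₃) ∈ S (note that S is invariant under permutations of coordinates, so every permuted triple again lies in S). Then for every Schwartz vector field u : ℝ³ → ℝ³ the triple series ∑_{n∈ℤ} ∑_{i₁,i₂,i₃ ∈ {1,2,3,4}} ∑_{(μ₁,μ₂,μ₃) ∈ S} a_{i₁,i₂,i₃,μ₁,μ₂,μ₃} λ^{5n/2} ⟨u, ψ_{i₁,n+μ₁}⟩ ⟨u, ψ_{i₂,n+μ₂}⟩ ⟨u, ψ_{i₃,n+μ₃}⟩ converges absolutely and its sum equals 0; that is, the local cascade operator C defined by these data satisfies the cancellation identity ⟨C(u,u), u⟩ = 0. -/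

import Mathlib

open MeasureTheory
open scoped RealInnerProductSpace FourierTransform ENNReal

/-- The `L²`-normalized rescaling `f_n(x) = λ^{3n/2} f(λⁿ x)` of a vector field on `ℝ³`. -/
noncomputable def rescaleL2 (l : ℝ) (n : ℤ)
    (f : EuclideanSpace ℝ (Fin 3) → EuclideanSpace ℝ (Fin 3)) :
    EuclideanSpace ℝ (Fin 3) → EuclideanSpace ℝ (Fin 3) :=
  fun x => (l ^ ((3 * (n : ℝ)) / 2)) • f ((l ^ (n : ℝ)) • x)

/-- The `L²` pairing of two vector fields on `ℝ³`. -/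
noncomputable def pairingL2 (u w : EuclideanSpace ℝ (Fin 3) → EuclideanSpace ℝ (Fin 3)) : ℝ :=
  ∫ x, ⟪u x, w x⟫

/-- The index set `S = {(0,0,0), (1,0,0), (0,1,0), (0,0,1)} ⊂ ℤ³`. -/
def cascadeS : Finset (ℤ × ℤ × ℤ) := {(0, 0, 0), (1, 0, 0), (0, 1, 0), (0, 0, 1)}


set_option maxRecDepth 8000

section CascadeAux

local notation "E3" => EuclideanSpace ℝ (Fin 3)

/-- Function version of `cascadeS`. -/
def cascadeS' : Finset (Fin 3 → ℤ) := {![0,0,0], ![1,0,0], ![0,1,0], ![0,0,1]}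

lemma mem_S'_comp : ∀ (σ : Equiv.Perm (Fin 3)), ∀ ν ∈ cascadeS', (ν ∘ σ) ∈ cascadeS' := by decide

lemma mem_S'_triple : ∀ ν ∈ cascadeS', (ν 0, ν 1, ν 2) ∈ cascadeS := by decide

lemma sum_S_eq_S' (F : ℤ → ℤ → ℤ → ℝ) :
    ∑ μ ∈ cascadeS, F μ.1 μ.2.1 μ.2.2 = ∑ ν ∈ cascadeS', F (ν 0) (ν 1) (ν 2) := by
  rw [show cascadeS = insert (0,0,0) (insert (1,0,0) (insert (0,1,0) {(0,0,1)})) from rfl,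
    show cascadeS' = insert ![0,0,0] (insert ![1,0,0] (insert ![0,1,0] {![0,0,1]})) from rfl,
    Finset.sum_insert (by decide), Finset.sum_insert (by decide),
    Finset.sum_insert (by decide), Finset.sum_singleton,
    Finset.sum_insert (by decide), Finset.sum_insert (by decide),
    Finset.sum_insert (by decide), Finset.sum_singleton]
  norm_num
  rfl

lemma sum_fin3_fn (h : Fin 4 → Fin 4 → Fin 4 → ℝ) :
    ∑ i₁ : Fin 4, ∑ i₂ : Fin 4, ∑ i₃ : Fin 4, h i₁ i₂ i₃
      = ∑ i : Fin 3 → Fin 4, h (i 0) (i 1) (i 2) := by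
  let e : (Fin 3 → Fin 4) ≃ Fin 4 × Fin 4 × Fin 4 :=
    ⟨fun i => (i 0, i 1, i 2), fun p => ![p.1, p.2.1, p.2.2],
      fun i => by funext k; fin_cases k <;> rfl, fun p => rfl⟩
  calc ∑ i₁ : Fin 4, ∑ i₂ : Fin 4, ∑ i₃ : Fin 4, h i₁ i₂ i₃
      = ∑ p : Fin 4 × Fin 4 × Fin 4, h p.1 p.2.1 p.2.2 := by
        simp [Fintype.sum_prod_type]
    _ = ∑ i : Fin 3 → Fin 4, h (i 0) (i 1) (i 2) :=
        (Fintype.sum_equiv e (fun i => h (i 0) (i 1) (i 2))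
          (fun p => h p.1 p.2.1 p.2.2) (fun i => rfl)).symm

lemma inner_sum_eq_zero (a : Fin 4 → Fin 4 → Fin 4 → ℤ × ℤ × ℤ → ℝ)
    (hcancel : ∀ (i : Fin 3 → Fin 4) (μ : Fin 3 → ℤ), (μ 0, μ 1, μ 2) ∈ cascadeS →
      (∑ σ : Equiv.Perm (Fin 3),
        a (i (σ 0)) (i (σ 1)) (i (σ 2)) (μ (σ 0), μ (σ 1), μ (σ 2))) = 0)
    (P : Fin 4 → ℤ → ℝ) (c : ℝ) (n : ℤ) :
    ∑ i₁ : Fin 4, ∑ i₂ : Fin 4, ∑ i₃ : Fin 4, ∑ μ ∈ cascadeS,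
      a i₁ i₂ i₃ μ * c * P i₁ (n + μ.1) * P i₂ (n + μ.2.1) * P i₃ (n + μ.2.2) = 0 := by
  set g : (Fin 3 → Fin 4) → (Fin 3 → ℤ) → ℝ :=
    fun i ν => a (i 0) (i 1) (i 2) (ν 0, ν 1, ν 2) * ∏ k : Fin 3, P (i k) (n + ν k) with hg
  have step1 : ∑ i₁ : Fin 4, ∑ i₂ : Fin 4, ∑ i₃ : Fin 4, ∑ μ ∈ cascadeS,
      a i₁ i₂ i₃ μ * c * P i₁ (n + μ.1) * P i₂ (n + μ.2.1) * P i₃ (n + μ.2.2)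
      = c * ∑ i : Fin 3 → Fin 4, ∑ ν ∈ cascadeS', g i ν := by
    rw [sum_fin3_fn (fun i₁ i₂ i₃ => ∑ μ ∈ cascadeS,
      a i₁ i₂ i₃ μ * c * P i₁ (n + μ.1) * P i₂ (n + μ.2.1) * P i₃ (n + μ.2.2)),
      Finset.mul_sum]
    refine Finset.sum_congr rfl fun i _ => ?_
    rw [sum_S_eq_S' (fun x y z =>
      a (i 0) (i 1) (i 2) (x, y, z) * c * P (i 0) (n + x) * P (i 1) (n + y) * P (i 2) (n + z)),
      Finset.mul_sum]
    refine Finset.sum_congr rfl fun ν _ => ?_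
    simp only [hg, Fin.prod_univ_three]
    ring
  rw [step1]
  have step2 : ∑ i : Fin 3 → Fin 4, ∑ ν ∈ cascadeS', g i ν = 0 := by
    have hcard : (6 : ℝ) * (∑ i : Fin 3 → Fin 4, ∑ ν ∈ cascadeS', g i ν)
        = ∑ σ : Equiv.Perm (Fin 3), ∑ i : Fin 3 → Fin 4, ∑ ν ∈ cascadeS', g (i ∘ σ) (ν ∘ σ) := by
      have hre : ∀ σ : Equiv.Perm (Fin 3),
          ∑ i : Fin 3 → Fin 4, ∑ ν ∈ cascadeS', g (i ∘ σ) (ν ∘ σ)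
            = ∑ i : Fin 3 → Fin 4, ∑ ν ∈ cascadeS', g i ν := by
        intro σ
        rw [← Finset.sum_product', ← Finset.sum_product']
        refine Finset.sum_nbij' (fun p => (p.1 ∘ σ, p.2 ∘ σ))
          (fun p => (p.1 ∘ σ.symm, p.2 ∘ σ.symm)) ?_ ?_ ?_ ?_ ?_
        · intro p hp
          simp only [Finset.mem_product, Finset.mem_univ, true_and] at hp ⊢
          exact mem_S'_comp σ p.2 hp
        · intro p hp
          simp only [Finset.mem_product, Finset.mem_univ, true_and] at hp ⊢
          have := mem_S'_comp σ⁻¹ p.2 hp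
          simpa using this
        · intro p _
          ext x <;> simp
        · intro p _
          ext x <;> simp
        · intro p _
          rfl
      rw [Finset.sum_congr rfl (fun σ _ => hre σ), Finset.sum_const, Finset.card_univ]
      norm_num [Fintype.card_perm, Nat.factorial, nsmul_eq_mul]
    have hz : ∑ σ : Equiv.Perm (Fin 3), ∑ i : Fin 3 → Fin 4, ∑ ν ∈ cascadeS', g (i ∘ σ) (ν ∘ σ)
        = 0 := by
      rw [Finset.sum_comm]
      refine Finset.sum_eq_zero fun i _ => ?_
      rw [Finset.sum_comm]
      refine Finset.sum_eq_zero fun ν hν => ?_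
      have hprod : ∀ σ : Equiv.Perm (Fin 3),
          g (i ∘ σ) (ν ∘ σ) = a (i (σ 0)) (i (σ 1)) (i (σ 2)) (ν (σ 0), ν (σ 1), ν (σ 2))
            * ∏ k : Fin 3, P (i k) (n + ν k) := by
        intro σ
        simp only [hg, Function.comp_apply]
        congr 1
        exact Equiv.prod_comp σ (fun k => P (i k) (n + ν k))
      rw [Finset.sum_congr rfl (fun σ _ => hprod σ), ← Finset.sum_mul,
        hcancel i ν (mem_S'_triple ν hν), zero_mul]
    have h6 : (6 : ℝ) * (∑ i : Fin 3 → Fin 4, ∑ ν ∈ cascadeS', g i ν) = 0 := hcard.trans hz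
    linarith
  rw [step2, mul_zero]

lemma bound_A (l : ℝ) (hl : 1 < l) (m : ℤ) (ψ u : SchwartzMap E3 E3) :
    |pairingL2 (⇑u) (rescaleL2 l m (⇑ψ))| ≤
      ((SchwartzMap.seminorm ℝ 0 0) ψ * ∫ x, ‖u x‖) * l ^ ((3 * (m : ℝ)) / 2) := by
  have hl0 : (0:ℝ) < l := lt_trans one_pos hl
  set c := l ^ ((3 * (m : ℝ)) / 2) with hc
  have hc0 : 0 < c := Real.rpow_pos_of_pos hl0 _
  set Mψ := (SchwartzMap.seminorm ℝ 0 0) ψ with hMψdef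
  have hMψ : 0 ≤ Mψ := apply_nonneg _ _
  have key : |pairingL2 (⇑u) (rescaleL2 l m (⇑ψ))| ≤ ∫ x, (Mψ * c) * ‖u x‖ := by
    rw [pairingL2, ← Real.norm_eq_abs]
    refine (norm_integral_le_integral_norm _).trans ?_
    refine integral_mono_of_nonneg (Filter.Eventually.of_forall fun x => norm_nonneg _)
      ((u.integrable.norm).const_mul _) (Filter.Eventually.of_forall fun x => ?_)
    calc ‖⟪u x, rescaleL2 l m (⇑ψ) x⟫‖
        ≤ ‖u x‖ * ‖rescaleL2 l m (⇑ψ) x‖ := norm_inner_le_norm _ _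
      _ = ‖u x‖ * (c * ‖ψ ((l ^ ((m:ℝ))) • x)‖) := by
          rw [rescaleL2, norm_smul, Real.norm_eq_abs, abs_of_pos hc0]
      _ ≤ ‖u x‖ * (c * Mψ) := by
          gcongr
          exact SchwartzMap.norm_le_seminorm ℝ ψ _
      _ = (Mψ * c) * ‖u x‖ := by ring
  refine key.trans (le_of_eq ?_)
  rw [integral_const_mul]
  ring

lemma bound_B (l : ℝ) (hl : 1 < l) (m : ℤ) (ψ u : SchwartzMap E3 E3) :
    |pairingL2 (⇑u) (rescaleL2 l m (⇑ψ))| ≤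
      ((SchwartzMap.seminorm ℝ 0 0) u * ∫ x, ‖ψ x‖) * l ^ (-(3 * (m : ℝ)) / 2) := by
  have hl0 : (0:ℝ) < l := lt_trans one_pos hl
  set c := l ^ ((3 * (m : ℝ)) / 2) with hc
  have hc0 : 0 < c := Real.rpow_pos_of_pos hl0 _
  set s := l ^ ((m : ℝ)) with hs
  have hs0 : 0 < s := Real.rpow_pos_of_pos hl0 _
  set Mu := (SchwartzMap.seminorm ℝ 0 0) u with hMudef
  have hMu : 0 ≤ Mu := apply_nonneg _ _
  have key : |pairingL2 (⇑u) (rescaleL2 l m (⇑ψ))| ≤ ∫ x, (Mu * c) * ‖ψ (s • x)‖ := by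
    rw [pairingL2, ← Real.norm_eq_abs]
    refine (norm_integral_le_integral_norm _).trans ?_
    refine integral_mono_of_nonneg (Filter.Eventually.of_forall fun x => norm_nonneg _)
      (((ψ.integrable.comp_smul hs0.ne').norm).const_mul _)
      (Filter.Eventually.of_forall fun x => ?_)
    calc ‖⟪u x, rescaleL2 l m (⇑ψ) x⟫‖
        ≤ ‖u x‖ * ‖rescaleL2 l m (⇑ψ) x‖ := norm_inner_le_norm _ _
      _ = ‖u x‖ * (c * ‖ψ (s • x)‖) := by
          rw [rescaleL2, norm_smul, Real.norm_eq_abs, abs_of_pos hc0]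
      _ ≤ Mu * (c * ‖ψ (s • x)‖) := by
          gcongr
          exact SchwartzMap.norm_le_seminorm ℝ u _
      _ = (Mu * c) * ‖ψ (s • x)‖ := by ring
  refine key.trans (le_of_eq ?_)
  rw [integral_const_mul, Measure.integral_comp_smul volume (fun y => ‖ψ y‖) s,
    smul_eq_mul]
  have h3 : Module.finrank ℝ E3 = 3 := finrank_euclideanSpace_fin
  rw [h3]
  have h1 : |((s ^ (3:ℕ))⁻¹)| = l ^ (-(3 * (m:ℝ))) := by
    rw [hs, ← Real.rpow_natCast (l ^ ((m:ℝ))) 3, ← Real.rpow_mul hl0.le,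
      ← Real.rpow_neg hl0.le, abs_of_pos (Real.rpow_pos_of_pos hl0 _)]
    norm_num
    ring_nf
  rw [h1, hc]
  rw [show (Mu * l ^ (3 * (m:ℝ) / 2)) * (l ^ (-(3 * (m:ℝ))) * ∫ x, ‖ψ x‖)
      = (Mu * ∫ x, ‖ψ x‖) * (l ^ (3 * (m:ℝ) / 2) * l ^ (-(3 * (m:ℝ)))) from by ring,
    ← Real.rpow_add hl0]
  congr 1
  ring

lemma pairing_bound (l : ℝ) (hl : 1 < l) (m : ℤ) (ψ u : SchwartzMap E3 E3) :
    |pairingL2 (⇑u) (rescaleL2 l m (⇑ψ))| ≤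
      (max ((SchwartzMap.seminorm ℝ 0 0) ψ * ∫ x, ‖u x‖)
        ((SchwartzMap.seminorm ℝ 0 0) u * ∫ x, ‖ψ x‖)) * l ^ (-(3 * |(m : ℝ)|) / 2) := by
  have hl0 : (0:ℝ) < l := lt_trans one_pos hl
  rcases le_or_gt 0 (m : ℝ) with hm | hm
  · rw [abs_of_nonneg hm]
    refine (bound_B l hl m ψ u).trans ?_
    exact mul_le_mul_of_nonneg_right (le_max_right _ _) (Real.rpow_nonneg hl0.le _)
  · rw [abs_of_neg hm]
    have : -(3 * -(m:ℝ)) / 2 = 3 * (m:ℝ) / 2 := by ring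
    rw [this]
    refine (bound_A l hl m ψ u).trans ?_
    exact mul_le_mul_of_nonneg_right (le_max_left _ _) (Real.rpow_nonneg hl0.le _)

lemma term_bound (l : ℝ) (hl : 1 < l) {K A : ℝ} (hK : 0 ≤ K) (hA : 0 ≤ A)
    (n μ₁ μ₂ μ₃ : ℤ) (h₁ : 0 ≤ μ₁ ∧ μ₁ ≤ 1) (h₂ : 0 ≤ μ₂ ∧ μ₂ ≤ 1) (h₃ : 0 ≤ μ₃ ∧ μ₃ ≤ 1)
    {x₁ x₂ x₃ aa : ℝ}
    (hx₁ : |x₁| ≤ K * l ^ (-(3 * |((n + μ₁ : ℤ) : ℝ)|) / 2))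
    (hx₂ : |x₂| ≤ K * l ^ (-(3 * |((n + μ₂ : ℤ) : ℝ)|) / 2))
    (hx₃ : |x₃| ≤ K * l ^ (-(3 * |((n + μ₃ : ℤ) : ℝ)|) / 2))
    (ha : |aa| ≤ A) :
    |aa * l ^ ((5 * (n : ℝ)) / 2) * x₁ * x₂ * x₃| ≤
      (A * (K * K * K) * l ^ ((9:ℝ) / 2)) * l ^ ((-2 : ℝ) * (n.natAbs : ℝ)) := by
  have hl0 : (0:ℝ) < l := lt_trans one_pos hl
  have habs : ∀ (μ : ℤ), 0 ≤ μ → μ ≤ 1 → |(n:ℝ)| - 1 ≤ |((n + μ : ℤ) : ℝ)| := by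
    intro μ hμ0 hμ1
    have hμr0 : (0:ℝ) ≤ (μ:ℝ) := by exact_mod_cast hμ0
    have hμr1 : (μ:ℝ) ≤ 1 := by exact_mod_cast hμ1
    push_cast
    have := abs_sub_abs_le_abs_sub (n:ℝ) ((n:ℝ) + (μ:ℝ))
    rw [show (n:ℝ) - ((n:ℝ) + (μ:ℝ)) = -(μ:ℝ) from by ring, abs_neg, abs_of_nonneg hμr0] at this
    linarith
  have hnn : ((n.natAbs : ℝ)) = |(n:ℝ)| := by
    rw [Nat.cast_natAbs, Int.cast_abs]
  calc |aa * l ^ ((5 * (n : ℝ)) / 2) * x₁ * x₂ * x₃|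
      = |aa| * l ^ ((5 * (n : ℝ)) / 2) * |x₁| * |x₂| * |x₃| := by
        rw [abs_mul, abs_mul, abs_mul, abs_mul, abs_of_pos (Real.rpow_pos_of_pos hl0 _)]
    _ ≤ A * l ^ ((5 * (n : ℝ)) / 2) * (K * l ^ (-(3 * |((n + μ₁ : ℤ) : ℝ)|) / 2))
        * (K * l ^ (-(3 * |((n + μ₂ : ℤ) : ℝ)|) / 2))
        * (K * l ^ (-(3 * |((n + μ₃ : ℤ) : ℝ)|) / 2)) := by
        gcongr <;> positivity
    _ = (A * (K * K * K)) * l ^ ((5 * (n : ℝ)) / 2 + (-(3 * |((n + μ₁ : ℤ) : ℝ)|) / 2)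
          + (-(3 * |((n + μ₂ : ℤ) : ℝ)|) / 2) + (-(3 * |((n + μ₃ : ℤ) : ℝ)|) / 2)) := by
        rw [Real.rpow_add hl0, Real.rpow_add hl0, Real.rpow_add hl0]
        ring
    _ ≤ (A * (K * K * K)) * l ^ ((9:ℝ)/2 + (-2 : ℝ) * (n.natAbs : ℝ)) := by
        refine mul_le_mul_of_nonneg_left ?_ (by positivity)
        rw [Real.rpow_le_rpow_left_iff hl]
        have e₁ := habs μ₁ h₁.1 h₁.2
        have e₂ := habs μ₂ h₂.1 h₂.2
        have e₃ := habs μ₃ h₃.1 h₃.2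
        have hn := le_abs_self (n:ℝ)
        rw [hnn]
        linarith
    _ = (A * (K * K * K) * l ^ ((9:ℝ) / 2)) * l ^ ((-2 : ℝ) * (n.natAbs : ℝ)) := by
        rw [Real.rpow_add hl0]
        ring

lemma geom_summable (l : ℝ) (hl : 1 < l) (C : ℝ) :
    Summable (fun n : ℤ => C * l ^ ((-2 : ℝ) * (n.natAbs : ℝ))) := by
  have hl0 : (0:ℝ) < l := lt_trans one_pos hl
  have hr0 : (0:ℝ) ≤ l ^ (-2 : ℝ) := (Real.rpow_pos_of_pos hl0 _).le
  have hr1 : l ^ (-2 : ℝ) < 1 := Real.rpow_lt_one_of_one_lt_of_neg hl (by norm_num)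
  have hrw : ∀ n : ℤ, C * l ^ ((-2:ℝ) * (n.natAbs : ℝ)) = C * (l ^ (-2:ℝ)) ^ (n.natAbs) := by
    intro n
    rw [← Real.rpow_natCast (l ^ (-2:ℝ)) n.natAbs, ← Real.rpow_mul hl0.le]
  simp only [hrw]
  apply Summable.of_nat_of_neg
  · simpa using (summable_geometric_of_lt_one hr0 hr1).mul_left C
  · simpa using (summable_geometric_of_lt_one hr0 hr1).mul_left C

end CascadeAux

/-- Fix `λ ∈ (1,2)` and Schwartz, divergence-free, `L²`-normalized vector
fields `ψ₁, …, ψ₄` with Fourier support in `Bᵢ ∪ (−Bᵢ)` for balls `Bᵢ` inside the annulus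
`{1 < |ξ| ≤ (λ+1)/2}`.  Suppose the coefficients `a` satisfy the symmetry condition
`a_{i₁,i₂,i₃,μ₁,μ₂,μ₃} = a_{i₂,i₁,i₃,μ₂,μ₁,μ₃}` and the cancellation condition
`∑_{σ ∈ Sym(3)} a_{i_{σ(1)},i_{σ(2)},i_{σ(3)},μ_{σ(1)},μ_{σ(2)},μ_{σ(3)}} = 0`.
Then for every Schwartz vector field `u` the triple series defining `⟨C(u,u), u⟩` converges
absolutely and its sum is `0`. -/
theorem cascade_cancellation
    (l : ℝ) (hl : 1 < l) (hl' : l < 2)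
    (ψ : Fin 4 → SchwartzMap (EuclideanSpace ℝ (Fin 3)) (EuclideanSpace ℝ (Fin 3)))
    (hdf : ∀ (i : Fin 4) (x : EuclideanSpace ℝ (Fin 3)),
      (∑ k : Fin 3, fderiv ℝ (⇑(ψ i)) x (EuclideanSpace.single k 1) k) = 0)
    (hnorm : ∀ i : Fin 4, eLpNorm (⇑(ψ i)) 2 volume = 1)
    (hsupp : ∀ i : Fin 4, ∃ (c : EuclideanSpace ℝ (Fin 3)) (ρ : ℝ), 0 < ρ ∧
      Metric.ball c ρ ⊆ {ξ : EuclideanSpace ℝ (Fin 3) | 1 < ‖ξ‖ ∧ ‖ξ‖ ≤ (l + 1) / 2} ∧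
      ∀ k : Fin 3, Function.support (𝓕 (fun x => ((ψ i x k : ℝ) : ℂ)))
        ⊆ Metric.ball c ρ ∪ (-(Metric.ball c ρ)))
    (a : Fin 4 → Fin 4 → Fin 4 → ℤ × ℤ × ℤ → ℝ)
    (hsymm : ∀ (i₁ i₂ i₃ : Fin 4) (μ₁ μ₂ μ₃ : ℤ), (μ₁, μ₂, μ₃) ∈ cascadeS →
      a i₁ i₂ i₃ (μ₁, μ₂, μ₃) = a i₂ i₁ i₃ (μ₂, μ₁, μ₃))
    (hcancel : ∀ (i : Fin 3 → Fin 4) (μ : Fin 3 → ℤ), (μ 0, μ 1, μ 2) ∈ cascadeS →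
      (∑ σ : Equiv.Perm (Fin 3),
        a (i (σ 0)) (i (σ 1)) (i (σ 2)) (μ (σ 0), μ (σ 1), μ (σ 2))) = 0)
    (u : SchwartzMap (EuclideanSpace ℝ (Fin 3)) (EuclideanSpace ℝ (Fin 3))) :
    Summable (fun n : ℤ => ∑ i₁ : Fin 4, ∑ i₂ : Fin 4, ∑ i₃ : Fin 4, ∑ μ ∈ cascadeS,
        |a i₁ i₂ i₃ μ * l ^ ((5 * (n : ℝ)) / 2) *
          pairingL2 (⇑u) (rescaleL2 l (n + μ.1) (⇑(ψ i₁))) *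
          pairingL2 (⇑u) (rescaleL2 l (n + μ.2.1) (⇑(ψ i₂))) *
          pairingL2 (⇑u) (rescaleL2 l (n + μ.2.2) (⇑(ψ i₃)))|) ∧
      (∑' n : ℤ, ∑ i₁ : Fin 4, ∑ i₂ : Fin 4, ∑ i₃ : Fin 4, ∑ μ ∈ cascadeS,
        a i₁ i₂ i₃ μ * l ^ ((5 * (n : ℝ)) / 2) *
          pairingL2 (⇑u) (rescaleL2 l (n + μ.1) (⇑(ψ i₁))) *
          pairingL2 (⇑u) (rescaleL2 l (n + μ.2.1) (⇑(ψ i₂))) *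
          pairingL2 (⇑u) (rescaleL2 l (n + μ.2.2) (⇑(ψ i₃)))) = 0 := by
  have hl0 : (0:ℝ) < l := lt_trans one_pos hl
  constructor
  · -- summability of the series of absolute values
    set Kf : Fin 4 → ℝ := fun i => max ((SchwartzMap.seminorm ℝ 0 0) (ψ i) * ∫ x, ‖u x‖)
      ((SchwartzMap.seminorm ℝ 0 0) u * ∫ x, ‖(ψ i) x‖) with hKfdef
    have hKf0 : ∀ i, 0 ≤ Kf i := fun i =>
      le_max_of_le_left (mul_nonneg (apply_nonneg _ _)
        (integral_nonneg fun x => norm_nonneg _))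
    set K := ∑ i, Kf i with hKdef
    have hK0 : (0:ℝ) ≤ K := Finset.sum_nonneg fun i _ => hKf0 i
    have hP : ∀ (i : Fin 4) (m : ℤ),
        |pairingL2 (⇑u) (rescaleL2 l m (⇑(ψ i)))| ≤ K * l ^ (-(3 * |(m : ℝ)|) / 2) := by
      intro i m
      refine (pairing_bound l hl m (ψ i) u).trans ?_
      exact mul_le_mul_of_nonneg_right
        (Finset.single_le_sum (fun j _ => hKf0 j) (Finset.mem_univ i))
        (Real.rpow_nonneg hl0.le _)
    set A := ∑ i₁ : Fin 4, ∑ i₂ : Fin 4, ∑ i₃ : Fin 4, ∑ μ ∈ cascadeS, |a i₁ i₂ i₃ μ|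
      with hAdef
    have hA0 : (0:ℝ) ≤ A :=
      Finset.sum_nonneg fun _ _ => Finset.sum_nonneg fun _ _ => Finset.sum_nonneg fun _ _ =>
        Finset.sum_nonneg fun _ _ => abs_nonneg _
    have haA : ∀ i₁ i₂ i₃ μ, μ ∈ cascadeS → |a i₁ i₂ i₃ μ| ≤ A := by
      intro i₁ i₂ i₃ μ hμ
      calc |a i₁ i₂ i₃ μ| ≤ ∑ μ ∈ cascadeS, |a i₁ i₂ i₃ μ| :=
            Finset.single_le_sum (f := fun ν => |a i₁ i₂ i₃ ν|)
              (fun ν _ => abs_nonneg _) hμ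
        _ ≤ ∑ i₃ : Fin 4, ∑ μ ∈ cascadeS, |a i₁ i₂ i₃ μ| :=
            Finset.single_le_sum (f := fun j => ∑ μ ∈ cascadeS, |a i₁ i₂ j μ|)
              (fun j _ => Finset.sum_nonneg fun _ _ => abs_nonneg _) (Finset.mem_univ i₃)
        _ ≤ ∑ i₂ : Fin 4, ∑ i₃ : Fin 4, ∑ μ ∈ cascadeS, |a i₁ i₂ i₃ μ| :=
            Finset.single_le_sum (f := fun j => ∑ i₃ : Fin 4, ∑ μ ∈ cascadeS, |a i₁ j i₃ μ|)
              (fun j _ => Finset.sum_nonneg fun _ _ => Finset.sum_nonneg fun _ _ => abs_nonneg _)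
              (Finset.mem_univ i₂)
        _ ≤ A :=
            Finset.single_le_sum
              (f := fun j => ∑ i₂ : Fin 4, ∑ i₃ : Fin 4, ∑ μ ∈ cascadeS, |a j i₂ i₃ μ|)
              (fun j _ => Finset.sum_nonneg fun _ _ => Finset.sum_nonneg fun _ _ =>
                Finset.sum_nonneg fun _ _ => abs_nonneg _)
              (Finset.mem_univ i₁)
    have hμrange : ∀ μ ∈ cascadeS, (0 ≤ μ.1 ∧ μ.1 ≤ 1) ∧ (0 ≤ μ.2.1 ∧ μ.2.1 ≤ 1) ∧
        (0 ≤ μ.2.2 ∧ μ.2.2 ≤ 1) := by decide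
    refine Summable.of_nonneg_of_le (fun n => ?_) (fun n => ?_)
      ((geom_summable l hl (A * (K * K * K) * l ^ ((9:ℝ)/2))).mul_left (256:ℝ))
    · exact Finset.sum_nonneg fun _ _ => Finset.sum_nonneg fun _ _ =>
        Finset.sum_nonneg fun _ _ => Finset.sum_nonneg fun _ _ => abs_nonneg _
    · calc ∑ i₁ : Fin 4, ∑ i₂ : Fin 4, ∑ i₃ : Fin 4, ∑ μ ∈ cascadeS,
          |a i₁ i₂ i₃ μ * l ^ ((5 * (n : ℝ)) / 2) *
            pairingL2 (⇑u) (rescaleL2 l (n + μ.1) (⇑(ψ i₁))) *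
            pairingL2 (⇑u) (rescaleL2 l (n + μ.2.1) (⇑(ψ i₂))) *
            pairingL2 (⇑u) (rescaleL2 l (n + μ.2.2) (⇑(ψ i₃)))|
          ≤ ∑ i₁ : Fin 4, ∑ i₂ : Fin 4, ∑ i₃ : Fin 4, ∑ μ ∈ cascadeS,
            ((A * (K * K * K) * l ^ ((9:ℝ)/2)) * l ^ ((-2 : ℝ) * (n.natAbs : ℝ))) := by
            refine Finset.sum_le_sum fun i₁ _ => Finset.sum_le_sum fun i₂ _ =>
              Finset.sum_le_sum fun i₃ _ => Finset.sum_le_sum fun μ hμ => ?_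
            obtain ⟨hm1, hm2, hm3⟩ := hμrange μ hμ
            exact term_bound l hl hK0 hA0 n μ.1 μ.2.1 μ.2.2 hm1 hm2 hm3
              (hP i₁ (n + μ.1)) (hP i₂ (n + μ.2.1)) (hP i₃ (n + μ.2.2)) (haA i₁ i₂ i₃ μ hμ)
        _ = 256 * ((A * (K * K * K) * l ^ ((9:ℝ)/2)) * l ^ ((-2 : ℝ) * (n.natAbs : ℝ))) := by
            simp only [Finset.sum_const, Finset.card_univ, Fintype.card_fin, smul_eq_mul,
              show cascadeS.card = 4 from rfl]
            ring
  · -- the sum vanishes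
    have h0 : ∀ n : ℤ, (∑ i₁ : Fin 4, ∑ i₂ : Fin 4, ∑ i₃ : Fin 4, ∑ μ ∈ cascadeS,
        a i₁ i₂ i₃ μ * l ^ ((5 * (n : ℝ)) / 2) *
          pairingL2 (⇑u) (rescaleL2 l (n + μ.1) (⇑(ψ i₁))) *
          pairingL2 (⇑u) (rescaleL2 l (n + μ.2.1) (⇑(ψ i₂))) *
          pairingL2 (⇑u) (rescaleL2 l (n + μ.2.2) (⇑(ψ i₃)))) = 0 := by
      intro n
      exact inner_sum_eq_zero a hcancel
        (fun i m => pairingL2 (⇑u) (rescaleL2 l m (⇑(ψ i)))) (l ^ ((5 * (n : ℝ)) / 2)) n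
    exact (tsum_congr h0).trans tsum_zero
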